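/- Let x_n be the unique positive solution of ((x+1)/x)^n · 1/(2(x+1)) = 1 (for n large enough so that a solution exists). Then the sequence (x_n) is increasing for large n, tends to infinity, and satisfies x_n · ln x_n ~ n as n → ∞; consequently x_n ~ n/ln n. -/

import Mathlib

open Filter Asymptotics


-- auxiliary limits
lemma auxA : Tendsto (fun y : ℝ => y * Real.log ((y+1)/y)) atTop (nhds 1) := by
  have := Real.tendsto_mul_log_one_add_div_atTop 1
  apply this.congr'
  filter_upwards [eventually_gt_atTop (0:ℝ)] with y hy
  rw [add_div, div_self hy.ne', add_comm]

lemma auxB : Tendsto (fun y : ℝ => Real.log (2*(y+1)) / Real.log y) atTop (nhds 1) := by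
  have h1 : Tendsto (fun y : ℝ => Real.log 2 / Real.log y) atTop (nhds 0) :=
    tendsto_const_nhds.div_atTop Real.tendsto_log_atTop
  have h2 : Tendsto (fun y : ℝ => Real.log ((y+1)/y) / Real.log y) atTop (nhds 0) := by
    have hc : Tendsto (fun y : ℝ => (y+1)/y) atTop (nhds 1) := by
      have h := (tendsto_const_nhds (x := (1:ℝ))).add tendsto_inv_atTop_zero
      norm_num at h
      apply h.congr'
      filter_upwards [eventually_gt_atTop (0:ℝ)] with y hy
      field_simp
    have hlog : Tendsto (fun y : ℝ => Real.log ((y+1)/y)) atTop (nhds 0) := by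
      have h := (Real.continuousAt_log one_ne_zero).tendsto.comp hc
      simpa [Function.comp_def, Real.log_one] using h
    exact hlog.div_atTop Real.tendsto_log_atTop
  have := (h1.add h2).add (tendsto_const_nhds (x := (1:ℝ)))
  norm_num at this
  apply this.congr'
  filter_upwards [eventually_gt_atTop (1:ℝ)] with y hy
  have hy0 : (0:ℝ) < y := by linarith
  have hly : Real.log y ≠ 0 := (Real.log_pos hy).ne'
  rw [Real.log_mul (by norm_num) (by positivity), Real.log_div (by positivity) hy0.ne']
  field_simp
  ring

lemma auxC : Tendsto (fun y : ℝ => (y * Real.log ((y+1)/y)) * (Real.log y / Real.log (2*(y+1))))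
    atTop (nhds 1) := by
  have h := auxA.mul (auxB.inv₀ one_ne_zero)
  norm_num at h
  exact h

lemma auxD : Tendsto (fun y : ℝ => Real.log (Real.log y) / Real.log y) atTop (nhds 0) := by
  have h := Real.isLittleO_log_id_atTop.tendsto_div_nhds_zero
  have := h.comp Real.tendsto_log_atTop
  simpa [Function.comp_def] using this

/-- Let `x_n` be, for large `n`, the unique positive solution of
`((x+1)/x)^n · 1/(2(x+1)) = 1`. Then `(x_n)` is increasing for large `n`, tends to
infinity, satisfies `x_n · ln x_n ~ n`, and consequently `x_n ~ n / ln n`. -/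
theorem stmt6 (x : ℕ → ℝ) (N : ℕ)
    (hpos : ∀ n ≥ N, 0 < x n)
    (hsol : ∀ n ≥ N, ((x n + 1) / x n) ^ n * (1 / (2 * (x n + 1))) = 1)
    (huniq : ∀ n ≥ N, ∀ y : ℝ, 0 < y → ((y + 1) / y) ^ n * (1 / (2 * (y + 1))) = 1 → y = x n) :
    (∃ N', ∀ n ≥ N', x n ≤ x (n + 1)) ∧
      Tendsto x atTop atTop ∧
      (fun n => x n * Real.log (x n)) ~[atTop] (fun n => (n : ℝ)) ∧
      x ~[atTop] (fun n => (n : ℝ) / Real.log n) := by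
  have key : ∀ n ≥ N, ((x n + 1) / x n) ^ n = 2 * (x n + 1) := by
    intro n hn
    have h := hsol n hn
    have hx := hpos n hn
    have h2 : (2 * (x n + 1)) ≠ 0 := by positivity
    rwa [mul_one_div, div_eq_one_iff_eq h2] at h
  have htop : Tendsto x atTop atTop := by
    rw [tendsto_atTop]
    intro b
    set c := max b 1 with hcdef
    have hc1 : (1:ℝ) ≤ c := le_max_right _ _
    have hc0 : (0:ℝ) < c := by linarith
    have hr : 1 < 1 + 1/c := by
      have : (0:ℝ) < 1/c := by positivity
      linarith
    obtain ⟨n0, hn0⟩ := ((tendsto_pow_atTop_atTop_of_one_lt hr).eventually_ge_atTop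
      (2*(c+1)+1)).exists_forall_of_atTop
    filter_upwards [eventually_ge_atTop N, eventually_ge_atTop n0] with n hN hn0'
    rcases le_or_gt (x n) c with h | h
    · exfalso
      have hx := hpos n hN
      have h1 : 1 + 1/c ≤ (x n + 1)/x n := by
        rw [le_div_iff₀ hx]
        have : 1/c ≤ 1/x n := one_div_le_one_div_of_le hx h
        have hxc : x n ≤ c := h
        have : (1/c) * x n ≤ 1 := by
          rw [one_div, inv_mul_le_iff₀ hc0]; linarith
        nlinarith
      have h2 : (1+1/c)^n ≤ ((x n+1)/x n)^n := pow_le_pow_left₀ (by positivity) h1 n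
      have h3 := key n hN
      have h4 := hn0 n hn0'
      nlinarith
    · calc b ≤ c := le_max_left _ _
        _ ≤ x n := h.le
  have mono : ∀ n ≥ N, x n ≤ x (n+1) := by
    intro n hn
    by_contra hlt
    push_neg at hlt
    have hx := hpos n hn
    have hx1 := hpos (n+1) (by omega)
    have kA := key n hn
    have kB := key (n+1) (by omega)
    have hratio : (x n + 1)/x n < (x (n+1) + 1)/(x (n+1)) := by
      rw [div_lt_div_iff₀ hx hx1]
      nlinarith
    have hpow : ((x n + 1)/x n)^(n+1) < ((x (n+1) + 1)/x (n+1))^(n+1) :=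
      pow_lt_pow_left₀ hratio (by positivity) (by omega)
    have e1 : ((x n + 1)/x n)^(n+1) = (2*(x n+1)) * ((x n+1)/x n) := by
      rw [pow_succ, kA]
    have hgt1 : 1 < (x n + 1)/x n := by rw [lt_div_iff₀ hx]; linarith
    rw [e1, kB] at hpow
    nlinarith
  have hlogeq : ∀ n ≥ N, (n:ℝ) * Real.log ((x n + 1)/x n) = Real.log (2*(x n+1)) := by
    intro n hn
    rw [← key n hn, Real.log_pow]
  have hev2 : ∀ᶠ n in atTop, 3 ≤ x n := htop.eventually_ge_atTop 3
  have hrat : Tendsto (fun n => x n * Real.log (x n) / n) atTop (nhds 1) := by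
    have hcomp := auxC.comp htop
    apply hcomp.congr'
    filter_upwards [hev2, eventually_ge_atTop N, eventually_ge_atTop 1] with n hx3 hN hn1
    have hx := hpos n hN
    have hL : 0 < Real.log ((x n+1)/x n) := Real.log_pos (by rw [lt_div_iff₀ hx]; linarith)
    have hR : 0 < Real.log (2*(x n+1)) := Real.log_pos (by nlinarith)
    have he := hlogeq n hN
    have hn' : (n:ℝ) = Real.log (2*(x n+1)) / Real.log ((x n+1)/x n) := by
      rw [eq_div_iff hL.ne']; linarith
    simp only [Function.comp]
    rw [hn']
    field_simp
  have heq1 : (fun n => x n * Real.log (x n)) ~[atTop] (fun n : ℕ => (n:ℝ)) := by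
    rw [isEquivalent_iff_tendsto_one]
    · exact hrat
    · filter_upwards [eventually_ge_atTop 1] with n hn
      exact Nat.cast_ne_zero.2 (by omega)
  have hd : Tendsto (fun n => Real.log (x n * Real.log (x n) / n)) atTop (nhds 0) := by
    have h := (Real.continuousAt_log one_ne_zero).tendsto.comp hrat
    simpa [Function.comp_def, Real.log_one] using h
  have hδ : Tendsto (fun n => Real.log (x n * Real.log (x n) / n) / Real.log n) atTop (nhds 0) :=
    hd.div_atTop (Real.tendsto_log_atTop.comp tendsto_natCast_atTop_atTop)
  have hε : Tendsto (fun n => Real.log (Real.log (x n)) / Real.log (x n)) atTop (nhds 0) := by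
    have h := auxD.comp htop
    simpa [Function.comp_def] using h
  have hlog3 : (1:ℝ) < Real.log 3 := by
    rw [show (1:ℝ) = Real.log (Real.exp 1) from (Real.log_exp 1).symm]
    apply Real.log_lt_log (Real.exp_pos _)
    linarith [Real.exp_one_lt_d9]
  have hlograt : Tendsto (fun n => Real.log (x n) / Real.log n) atTop (nhds 1) := by
    have h := (Tendsto.add (tendsto_const_nhds (x:=(1:ℝ))) hδ).div
      (Tendsto.add (tendsto_const_nhds (x:=(1:ℝ))) hε) (by norm_num)
    norm_num at h
    apply h.congr'
    filter_upwards [hev2, eventually_ge_atTop (max N 3)] with n hx3 hn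
    have hN : N ≤ n := le_trans (le_max_left _ _) hn
    have hn3 : (3:ℕ) ≤ n := le_trans (le_max_right _ _) hn
    have hx := hpos n hN
    have hlx : 1 < Real.log (x n) := by
      calc (1:ℝ) < Real.log 3 := hlog3
        _ ≤ Real.log (x n) := Real.log_le_log (by norm_num) hx3
    have hln : 1 < Real.log n := by
      calc (1:ℝ) < Real.log 3 := hlog3
        _ ≤ Real.log n := Real.log_le_log (by norm_num) (by exact_mod_cast hn3)
    have hllx : 0 ≤ Real.log (Real.log (x n)) := Real.log_nonneg hlx.le
    have hncast : ((n:ℝ)) ≠ 0 := Nat.cast_ne_zero.2 (by omega)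
    have hsplit : Real.log (x n * Real.log (x n) / n)
        = Real.log (x n) + Real.log (Real.log (x n)) - Real.log n := by
      rw [Real.log_div (by positivity) hncast, Real.log_mul hx.ne' (by positivity)]
    simp only [Pi.div_apply]
    rw [hsplit]
    have h1 : Real.log (x n) ≠ 0 := by linarith
    have h2 : Real.log (n:ℝ) ≠ 0 := by linarith
    have h3 : Real.log (x n) + Real.log (Real.log (x n)) ≠ 0 := by linarith
    field_simp
    ring
  have hfin : Tendsto (fun n => x n / ((n:ℝ)/Real.log n)) atTop (nhds 1) := by
    have h := hrat.mul (hlograt.inv₀ one_ne_zero)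
    norm_num at h
    apply h.congr'
    filter_upwards [hev2, eventually_ge_atTop (max N 3)] with n hx3 hn
    have hN : N ≤ n := le_trans (le_max_left _ _) hn
    have hn3 : (3:ℕ) ≤ n := le_trans (le_max_right _ _) hn
    have hncast : ((n:ℝ)) ≠ 0 := Nat.cast_ne_zero.2 (by omega)
    have hlx : 1 < Real.log (x n) := by
      calc (1:ℝ) < Real.log 3 := hlog3
        _ ≤ Real.log (x n) := Real.log_le_log (by norm_num) hx3
    have hln : 1 < Real.log n := by
      calc (1:ℝ) < Real.log 3 := hlog3
        _ ≤ Real.log n := Real.log_le_log (by norm_num) (by exact_mod_cast hn3)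
    have h1 : Real.log (x n) ≠ 0 := by linarith
    have h2 : Real.log (n:ℝ) ≠ 0 := by linarith
    field_simp
  have heq2 : x ~[atTop] (fun n : ℕ => (n:ℝ)/Real.log n) := by
    rw [isEquivalent_iff_tendsto_one]
    · exact hfin
    · filter_upwards [eventually_ge_atTop 3] with n hn
      have hncast : ((n:ℝ)) ≠ 0 := Nat.cast_ne_zero.2 (by omega)
      have hln : 0 < Real.log n := Real.log_pos (by exact_mod_cast (by omega : 1 < n))
      exact div_ne_zero hncast hln.ne'
  exact ⟨⟨N, mono⟩, htop, heq1, heq2⟩
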